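/- For an integer d ≥ 3, an integer s with 1 ≤ s ≤ d−1, and real λ > 1, define C_{d,s}(λ) = s(d−s)(λ−1)²(λ+1) / (λ(d−1)(λs + d − s)) and R_{d,s}(λ) = (λ²s(s−1) + 2λs(d−s) + (d−s)(d−s−1)) / (s(d−s)(λ−1)²). Then for all integers 1 ≤ s < s' ≤ d−1 and reals λ, λ' > 1 such that C_{d,s}(λ) = C_{d,s'}(λ'), one has R_{d,s}(λ) < R_{d,s'}(λ'). -/

import Mathlib

private lemma g_mono_pos (c u v : ℝ) (hc : 0 < c) (hu : 0 < u) (huv : u ≤ v) :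
    u^2*(c+2+u)*(1+v) ≤ v^2*(c+2+v)*(1+u) := by
  have hv : 0 < v := lt_of_lt_of_le hu huv
  have hB : (0:ℝ) ≤ (c+2)*(u+v+u*v) + (u^2+u*v+v^2) + u*v*(u+v) := by
    nlinarith [mul_pos hu hv, mul_pos hc hu, mul_pos hc hv, mul_pos (mul_pos hc hu) hv,
      mul_pos (mul_pos hu hv) (add_pos hu hv)]
  nlinarith [mul_nonneg (sub_nonneg.2 huv) hB]

private lemma g_mono_neg (c u v : ℝ) (hc : 0 < c) (hu : -1 < u) (huv : u ≤ v) (hv : v ≤ 0) :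
    v^2*(c+2+v)*(1+u) ≤ u^2*(c+2+u)*(1+v) := by
  have h1u : 0 < 1 + u := by linarith
  have h1v : 0 < 1 + v := by linarith
  have hprod : (1+u)*(1+v) ≤ 1 := by nlinarith
  have hB : (c+2)*(u+v+u*v) + (u^2+u*v+v^2) + u*v*(u+v) ≤ 0 := by
    have e : (c+2)*(u+v+u*v) + (u^2+u*v+v^2) + u*v*(u+v)
        = (c+1)*((1+u)*(1+v) - 1) + (u+v)*((1+u)*(1+v)) := by ring
    rw [e]
    nlinarith [mul_nonneg (by linarith : (0:ℝ) ≤ c+1) (by linarith : (0:ℝ) ≤ 1 - (1+u)*(1+v)),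
      mul_nonneg (by linarith : (0:ℝ) ≤ -(u+v)) (mul_pos h1u h1v).le]
  nlinarith [mul_nonneg (sub_nonneg.2 huv) (neg_nonneg.2 hB)]

private lemma pack (d a lam : ℝ) (hd : 3 ≤ d) (ha : 1 ≤ a) (hb : 1 ≤ d - a) (hlam : 1 < lam) :
    ∃ P w t : ℝ,
      0 < P ∧ 0 < t ∧ w = (d - 2*a)*t ∧ P < 1 + w ∧
      a*(d-a)*w^2 = (d-2*a)^2*P ∧
      P*((a*(d-a)*(lam-1)^2*(lam+1)/(lam*d*(lam*a+(d-a)))) + 2 + w)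
        = (a*(d-a)*(lam-1)^2*(lam+1)/(lam*d*(lam*a+(d-a))))*(1+w) ∧
      0 < a*(d-a)*(lam-1)^2*(lam+1)/(lam*d*(lam*a+(d-a))) ∧
      (lam^2*a*(a-1) + 2*lam*a*(d-a) + (d-a)*(d-a-1))/(a*(d-a)*(lam-1)^2)
        = ((d-1) - P)/(d*P) := by
  have ha0 : 0 < a := by linarith
  have hb0 : 0 < d - a := by linarith
  have hl0 : 0 < lam := by linarith
  have hl1 : 0 < lam - 1 := by linarith
  have hq : 0 < lam*a + (d-a) := by nlinarith
  have hd0 : 0 < d := by linarith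
  have hqne : lam*a + (d-a) ≠ 0 := ne_of_gt hq
  have hlne : lam ≠ 0 := ne_of_gt hl0
  have hdne : d ≠ 0 := ne_of_gt hd0
  have hl1ne : lam - 1 ≠ 0 := ne_of_gt hl1
  have hane : a ≠ 0 := ne_of_gt ha0
  have hbne : d - a ≠ 0 := ne_of_gt hb0
  refine ⟨a*(d-a)*(lam-1)^2/(lam*a+(d-a))^2, (d-2*a)*((lam-1)/(lam*a+(d-a))),
    (lam-1)/(lam*a+(d-a)), ?_, div_pos hl1 hq, rfl, ?_, ?_, ?_, ?_, ?_⟩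
  · exact div_pos (mul_pos (mul_pos ha0 hb0) (pow_pos hl1 2)) (pow_pos hq 2)
  · have e : 1 + (d-2*a)*((lam-1)/(lam*a+(d-a))) - a*(d-a)*(lam-1)^2/(lam*a+(d-a))^2
        = lam*d^2/(lam*a+(d-a))^2 := by
      field_simp
      ring
    have h2 : 0 < lam*d^2/(lam*a+(d-a))^2 :=
      div_pos (mul_pos hl0 (pow_pos hd0 2)) (pow_pos hq 2)
    linarith
  · field_simp
  · field_simp
    ring
  · exact div_pos (mul_pos (mul_pos (mul_pos ha0 hb0) (pow_pos hl1 2)) (by linarith))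
      (mul_pos (mul_pos hl0 hd0) hq)
  · field_simp
    ring
private lemma key_pos (dd aa bb : ℝ) (h1 : 1 ≤ aa) (h2 : aa + 1 ≤ bb) (h3 : bb + 1 ≤ dd)
    (hD' : 0 ≤ dd - 2*bb) :
    (dd-2*bb)^2*(aa*(dd-aa)) < (dd-2*aa)^2*(bb*(dd-bb)) := by
  have habpos : 0 < aa*(dd-aa) := mul_pos (by linarith) (by linarith)
  have hdiffpos : 0 < bb*(dd-bb) - aa*(dd-aa) := by
    nlinarith [mul_pos (show (0:ℝ) < bb-aa by linarith) (show (0:ℝ) < dd-aa-bb by linarith)]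
  have hsq : (dd-2*bb)^2 + 4 ≤ (dd-2*aa)^2 := by
    nlinarith [mul_nonneg (show (0:ℝ) ≤ (dd-2*aa)-(dd-2*bb)-2 by linarith)
      (show (0:ℝ) ≤ (dd-2*aa)+(dd-2*bb)+2 by linarith)]
  nlinarith [mul_nonneg (sq_nonneg (dd-2*aa)) hdiffpos.le,
    mul_pos (show (0:ℝ) < (dd-2*aa)^2-(dd-2*bb)^2 by linarith) habpos]

private lemma key_neg (dd aa bb : ℝ) (h1 : 1 ≤ aa) (h2 : aa + 1 ≤ bb) (h3 : bb + 1 ≤ dd)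
    (hD : dd - 2*aa < 0) :
    (dd-2*aa)^2*(bb*(dd-bb)) < (dd-2*bb)^2*(aa*(dd-aa)) := by
  have habpos : 0 < bb*(dd-bb) := mul_pos (by linarith) (by linarith)
  have hdiffpos : 0 < aa*(dd-aa) - bb*(dd-bb) := by
    nlinarith [mul_pos (show (0:ℝ) < bb-aa by linarith) (show (0:ℝ) < aa+bb-dd by linarith)]
  have hsq : (dd-2*aa)^2 + 4 ≤ (dd-2*bb)^2 := by
    nlinarith [mul_nonneg (show (0:ℝ) ≤ (dd-2*aa)-(dd-2*bb)-2 by linarith)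
      (show (0:ℝ) ≤ -(dd-2*aa)-(dd-2*bb)-2 by linarith)]
  nlinarith [mul_nonneg (sq_nonneg (dd-2*bb)) hdiffpos.le,
    mul_pos (show (0:ℝ) < (dd-2*bb)^2-(dd-2*aa)^2 by linarith) habpos]
set_option maxHeartbeats 1600000 in
theorem subset_selection_monotone (d s s' : ℕ) (hd : 3 ≤ d)
    (hs : 1 ≤ s) (hss' : s < s') (hs' : s' ≤ d - 1)
    (lam lam' : ℝ) (hlam : 1 < lam) (hlam' : 1 < lam')
    (hC : (s : ℝ) * ((d : ℝ) - (s : ℝ)) * (lam - 1) ^ 2 * (lam + 1) /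
            (lam * ((d : ℝ) - 1) * (lam * (s : ℝ) + (d : ℝ) - (s : ℝ)))
        = (s' : ℝ) * ((d : ℝ) - (s' : ℝ)) * (lam' - 1) ^ 2 * (lam' + 1) /
            (lam' * ((d : ℝ) - 1) * (lam' * (s' : ℝ) + (d : ℝ) - (s' : ℝ)))) :
    (lam ^ 2 * (s : ℝ) * ((s : ℝ) - 1) + 2 * lam * (s : ℝ) * ((d : ℝ) - (s : ℝ))
        + ((d : ℝ) - (s : ℝ)) * ((d : ℝ) - (s : ℝ) - 1)) /
        ((s : ℝ) * ((d : ℝ) - (s : ℝ)) * (lam - 1) ^ 2)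
      < (lam' ^ 2 * (s' : ℝ) * ((s' : ℝ) - 1) + 2 * lam' * (s' : ℝ) * ((d : ℝ) - (s' : ℝ))
        + ((d : ℝ) - (s' : ℝ)) * ((d : ℝ) - (s' : ℝ) - 1)) /
        ((s' : ℝ) * ((d : ℝ) - (s' : ℝ)) * (lam' - 1) ^ 2) := by
  have hd3 : (3:ℝ) ≤ (d:ℝ) := by exact_mod_cast hd
  have hs1 : (1:ℝ) ≤ (s:ℝ) := by exact_mod_cast hs
  have hss : (s:ℝ) + 1 ≤ (s':ℝ) := by exact_mod_cast Nat.succ_le_of_lt hss'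
  have hs'd : (s':ℝ) + 1 ≤ (d:ℝ) := by
    have h : s' + 1 ≤ d := by omega
    exact_mod_cast h
  have hb : (1:ℝ) ≤ (d:ℝ) - (s:ℝ) := by linarith
  have hb' : (1:ℝ) ≤ (d:ℝ) - (s':ℝ) := by linarith
  have hs'1 : (1:ℝ) ≤ (s':ℝ) := by linarith
  obtain ⟨P, w, t, hP, ht, hw, hPw, hid, hE1, hcpos, hR⟩ := pack (d:ℝ) (s:ℝ) lam hd3 hs1 hb hlam
  obtain ⟨P', w', t', hP', ht', hw', hPw', hid', hE1', hcpos', hR'⟩ :=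
    pack (d:ℝ) (s':ℝ) lam' hd3 hs'1 hb' hlam'
  set c := (s:ℝ)*((d:ℝ)-(s:ℝ))*(lam-1)^2*(lam+1)/(lam*(d:ℝ)*(lam*(s:ℝ)+((d:ℝ)-(s:ℝ)))) with hcdef
  set c' := (s':ℝ)*((d:ℝ)-(s':ℝ))*(lam'-1)^2*(lam'+1)/(lam'*(d:ℝ)*(lam'*(s':ℝ)+((d:ℝ)-(s':ℝ)))) with hc'def
  -- basic positivity
  have hd0 : (0:ℝ) < (d:ℝ) := by linarith
  have hd1 : (0:ℝ) < (d:ℝ) - 1 := by linarith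
  have hl0 : (0:ℝ) < lam := by linarith
  have hl0' : (0:ℝ) < lam' := by linarith
  have hq1 : (0:ℝ) < lam * (s:ℝ) + (d:ℝ) - (s:ℝ) := by
    have e : (lam-1)*(s:ℝ) + (d:ℝ) = lam * (s:ℝ) + (d:ℝ) - (s:ℝ) := by ring
    have h := mul_pos (show (0:ℝ) < lam - 1 by linarith) (show (0:ℝ) < (s:ℝ) by linarith)
    linarith
  have hq2 : (0:ℝ) < lam' * (s':ℝ) + (d:ℝ) - (s':ℝ) := by
    have e : (lam'-1)*(s':ℝ) + (d:ℝ) = lam' * (s':ℝ) + (d:ℝ) - (s':ℝ) := by ring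
    have h := mul_pos (show (0:ℝ) < lam' - 1 by linarith) (show (0:ℝ) < (s':ℝ) by linarith)
    linarith
  have hq1' : (0:ℝ) < lam*(s:ℝ)+((d:ℝ)-(s:ℝ)) := by linarith
  have hq2' : (0:ℝ) < lam'*(s':ℝ)+((d:ℝ)-(s':ℝ)) := by linarith
  -- matched budgets: c = c'
  have hcc : c = c' := by
    rw [div_eq_div_iff (ne_of_gt (mul_pos (mul_pos hl0 hd1) hq1))
      (ne_of_gt (mul_pos (mul_pos hl0' hd1) hq2))] at hC
    rw [hcdef, hc'def, div_eq_div_iff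
      (ne_of_gt (mul_pos (mul_pos hl0 hd0) hq1'))
      (ne_of_gt (mul_pos (mul_pos hl0' hd0) hq2'))]
    have key : (s:ℝ) * ((d:ℝ) - (s:ℝ)) * (lam - 1) ^ 2 * (lam + 1) *
          (lam' * (lam' * (s':ℝ) + (d:ℝ) - (s':ℝ)))
        = (s':ℝ) * ((d:ℝ) - (s':ℝ)) * (lam' - 1) ^ 2 * (lam' + 1) *
          (lam * (lam * (s:ℝ) + (d:ℝ) - (s:ℝ))) := by
      apply mul_right_cancel₀ (ne_of_gt hd1)
      linear_combination hC
    linear_combination (d:ℝ) * key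
  rw [← hcc] at hE1' hcpos'
  have h1w : (0:ℝ) < 1 + w := by linarith
  have h1w' : (0:ℝ) < 1 + w' := by linarith
  have hab0 : (0:ℝ) < (s:ℝ)*((d:ℝ)-(s:ℝ)) := mul_pos (by linarith) (by linarith)
  have hab0' : (0:ℝ) < (s':ℝ)*((d:ℝ)-(s':ℝ)) := mul_pos (by linarith) (by linarith)
  have G1 : (s:ℝ)*((d:ℝ)-(s:ℝ))*w^2*(c+2+w) = c*((d:ℝ)-2*(s:ℝ))^2*(1+w) := by
    linear_combination (c+2+w)*hid + ((d:ℝ)-2*(s:ℝ))^2*hE1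
  have G2 : (s':ℝ)*((d:ℝ)-(s':ℝ))*w'^2*(c+2+w') = c*((d:ℝ)-2*(s':ℝ))^2*(1+w') := by
    linear_combination (c+2+w')*hid' + ((d:ℝ)-2*(s':ℝ))^2*hE1'
  -- key comparison: w' < w
  have hww' : w' < w := by
    by_contra hcon
    push_neg at hcon
    rcases le_or_gt 0 ((d:ℝ) - 2*(s':ℝ)) with hD' | hD'
    · -- positive branch
      have hDpos : (0:ℝ) < (d:ℝ) - 2*(s:ℝ) := by linarith
      have hw0 : 0 < w := by rw [hw]; exact mul_pos hDpos ht
      have hDs := key_pos (d:ℝ) (s:ℝ) (s':ℝ) hs1 hss hs'd hD'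
      have hm := g_mono_pos c w w' hcpos hw0 hcon
      have step1 : ((s:ℝ)*((d:ℝ)-(s:ℝ)))*((s':ℝ)*((d:ℝ)-(s':ℝ)))*(w^2*(c+2+w)*(1+w'))
          ≤ ((s:ℝ)*((d:ℝ)-(s:ℝ)))*((s':ℝ)*((d:ℝ)-(s':ℝ)))*(w'^2*(c+2+w')*(1+w)) :=
        mul_le_mul_of_nonneg_left hm (le_of_lt (mul_pos hab0 hab0'))
      have e1 : ((s:ℝ)*((d:ℝ)-(s:ℝ)))*((s':ℝ)*((d:ℝ)-(s':ℝ)))*(w^2*(c+2+w)*(1+w'))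
          = (((d:ℝ)-2*(s:ℝ))^2*((s':ℝ)*((d:ℝ)-(s':ℝ))))*(c*((1+w)*(1+w'))) := by
        linear_combination ((s':ℝ)*((d:ℝ)-(s':ℝ))*(1+w'))*G1
      have e2 : ((s:ℝ)*((d:ℝ)-(s:ℝ)))*((s':ℝ)*((d:ℝ)-(s':ℝ)))*(w'^2*(c+2+w')*(1+w))
          = (((d:ℝ)-2*(s':ℝ))^2*((s:ℝ)*((d:ℝ)-(s:ℝ))))*(c*((1+w)*(1+w'))) := by
        linear_combination ((s:ℝ)*((d:ℝ)-(s:ℝ))*(1+w))*G2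
      have hT : (0:ℝ) < c*((1+w)*(1+w')) := mul_pos hcpos (mul_pos h1w h1w')
      rw [e1, e2] at step1
      exact absurd (le_of_mul_le_mul_right step1 hT) (not_le.2 hDs)
    · rcases le_or_gt 0 ((d:ℝ) - 2*(s:ℝ)) with hD | hD
      · -- w ≥ 0 > w'
        have hw'0 : w' < 0 := by rw [hw']; exact mul_neg_of_neg_of_pos hD' ht'
        have hw0 : 0 ≤ w := by rw [hw]; exact mul_nonneg hD ht.le
        linarith
      · -- negative branch
        have hw'0 : w' ≤ 0 := by rw [hw']; exact (mul_neg_of_neg_of_pos hD' ht').le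
        have hDs := key_neg (d:ℝ) (s:ℝ) (s':ℝ) hs1 hss hs'd hD
        have hm := g_mono_neg c w w' hcpos (by linarith : (-1:ℝ) < w) hcon hw'0
        have step1 : ((s:ℝ)*((d:ℝ)-(s:ℝ)))*((s':ℝ)*((d:ℝ)-(s':ℝ)))*(w'^2*(c+2+w')*(1+w))
            ≤ ((s:ℝ)*((d:ℝ)-(s:ℝ)))*((s':ℝ)*((d:ℝ)-(s':ℝ)))*(w^2*(c+2+w)*(1+w')) :=
          mul_le_mul_of_nonneg_left hm (le_of_lt (mul_pos hab0 hab0'))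
        have e1 : ((s:ℝ)*((d:ℝ)-(s:ℝ)))*((s':ℝ)*((d:ℝ)-(s':ℝ)))*(w^2*(c+2+w)*(1+w'))
            = (((d:ℝ)-2*(s:ℝ))^2*((s':ℝ)*((d:ℝ)-(s':ℝ))))*(c*((1+w)*(1+w'))) := by
          linear_combination ((s':ℝ)*((d:ℝ)-(s':ℝ))*(1+w'))*G1
        have e2 : ((s:ℝ)*((d:ℝ)-(s:ℝ)))*((s':ℝ)*((d:ℝ)-(s':ℝ)))*(w'^2*(c+2+w')*(1+w))
            = (((d:ℝ)-2*(s':ℝ))^2*((s:ℝ)*((d:ℝ)-(s:ℝ))))*(c*((1+w)*(1+w'))) := by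
          linear_combination ((s:ℝ)*((d:ℝ)-(s:ℝ))*(1+w))*G2
        have hT : (0:ℝ) < c*((1+w)*(1+w')) := mul_pos hcpos (mul_pos h1w h1w')
        rw [e2, e1] at step1
        exact absurd (le_of_mul_le_mul_right step1 hT) (not_le.2 hDs)
  -- from w' < w deduce P' < P
  have hc2w : (0:ℝ) < c+2+w := by linarith
  have hc2w' : (0:ℝ) < c+2+w' := by linarith
  have hkey : P*((c+2+w)*(c+2+w')) - P'*((c+2+w)*(c+2+w')) = c*(c+1)*(w-w') := by
    linear_combination (c+2+w')*hE1 - (c+2+w)*hE1'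
  have hpos2 : (0:ℝ) < c*(c+1)*(w-w') :=
    mul_pos (mul_pos hcpos (by linarith)) (by linarith)
  have hPP' : P' < P := by
    have h5 : P'*((c+2+w)*(c+2+w')) < P*((c+2+w)*(c+2+w')) := by linarith
    exact lt_of_mul_lt_mul_right h5 (mul_pos hc2w hc2w').le
  -- conclude
  rw [hR, hR']
  rw [div_lt_div_iff₀ (mul_pos hd0 hP) (mul_pos hd0 hP')]
  have e : (((d:ℝ)-1)-P')*((d:ℝ)*P) - (((d:ℝ)-1)-P)*((d:ℝ)*P') = ((d:ℝ)-1)*(d:ℝ)*(P-P') := by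
    ring
  have h6 : (0:ℝ) < ((d:ℝ)-1)*(d:ℝ)*(P-P') := mul_pos (mul_pos hd1 hd0) (sub_pos.2 hPP')
  linarith
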